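/- The periodicity function of the period-doubling word admits the following linear representation: let v = [1,0,0,0,0,0] (a 1×6 integer row vector), w = [1,1,1,1,1,1]ᵀ (a 6×1 integer column vector), and let M₀ and M₁ be the 6×6 integer matrices M₀ = [[1,0,0,0,0,0],[0,0,0,1,0,1],[0,0,0,0,0,2],[0,0,0,0,1,0],[0,0,0,1,0,1],[0,0,0,0,0,0]] and M₁ = [[0,1,1,0,0,0],[0,0,0,0,1,0],[0,0,0,0,0,0],[0,1,1,0,0,0],[0,1,1,0,0,0],[0,0,2,0,0,0]]. Then for every i ≥ 1 with binary representation i_{ℓ−1} i_{ℓ−2} ⋯ i_0 (most significant digit first), p_pd(i) = v · M_{i_{ℓ−1}} M_{i_{ℓ−2}} ⋯ M_{i_0} · w. -/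

import Mathlib

open Finset Filter Asymptotics

/-- `n` is a local period of the infinite word `w` at position `i`:
`n ≥ 1` and either (`n ≤ i` and `w_{i+k} = w_{i-n+k}` for all `k < n`)
or (`n > i` and `w_k = w_{n+k}` for all `k < i`). -/
def IsLocalPeriodAt {α : Type*} (w : ℕ → α) (i n : ℕ) : Prop :=
  1 ≤ n ∧ ((n ≤ i ∧ ∀ k < n, w (i + k) = w (i - n + k)) ∨
           (i < n ∧ ∀ k < i, w k = w (n + k)))

/-- The periodicity function `p_w(i)`: the least local period of `w` at `i`. -/
noncomputable def perFn {α : Type*} (w : ℕ → α) (i : ℕ) : ℕ :=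
  sInf {n | IsLocalPeriodAt w i n}

/-- The summatory function `P_w(n) = ∑_{j<n} p_w(j)`. -/
noncomputable def sumFn {α : Type*} (w : ℕ → α) (n : ℕ) : ℕ :=
  ∑ j ∈ Finset.range n, perFn w j

/-- The periodic complexity `h_w(n) = P_w(n)/n`. -/
noncomputable def perComplexity {α : Type*} (w : ℕ → α) (n : ℕ) : ℝ :=
  (sumFn w n : ℝ) / n

/-- The period-doubling word: `pd_i = 1` iff the 2-adic valuation of `i+1` is odd. -/
def pd (i : ℕ) : ℕ :=
  if Odd ((i + 1).factorization 2) then 1 else 0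

/-- The matrix product `M_{i_{l-1}} M_{i_{l-2}} ⋯ M_{i_0}` over the binary
representation of `i`, most significant digit first. -/
def digitMatProd (M0 M1 : Matrix (Fin 6) (Fin 6) ℤ) (i : ℕ) : Matrix (Fin 6) (Fin 6) ℤ :=
  (((Nat.digits 2 i).reverse).map (fun d => if d = 1 then M1 else M0)).prod

/- ========================= Auxiliary lemmas ========================= -/

section Aux

lemma pd_le_one (k : ℕ) : pd k ≤ 1 := by
  unfold pd; split <;> omega

lemma pd_zero : pd 0 = 0 := by
  simp [pd]

lemma pd_one : pd 1 = 1 := by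
  unfold pd
  rw [show (1+1 : ℕ) = 2 by rfl, Nat.Prime.factorization_self Nat.prime_two]
  simp

lemma pd_even (k : ℕ) : pd (2*k) = 0 := by
  unfold pd
  rw [Nat.factorization_eq_zero_of_not_dvd (by omega)]
  simp

lemma pd_odd (k : ℕ) : pd (2*k+1) + pd k = 1 := by
  unfold pd
  have h : (2*k+1+1 : ℕ) = 2 * (k+1) := by ring
  rw [h, Nat.factorization_mul (by norm_num) (by omega)]
  simp [Nat.Prime.factorization_self Nat.prime_two, Nat.odd_add_one]
  rcases Nat.even_or_odd ((k+1).factorization 2) with he | ho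
  · simp [Nat.not_odd_iff_even.mpr he, he]
  · simp [ho, Nat.not_even_iff_odd.mpr ho]

lemma pd_even' {m : ℕ} (hm : m % 2 = 0) : pd m = 0 := by
  have := pd_even (m/2); rwa [show 2*(m/2) = m by omega] at this

lemma pd_odd' {m : ℕ} (hm : m % 2 = 1) : pd m + pd (m/2) = 1 := by
  have := pd_odd (m/2); rwa [show 2*(m/2)+1 = m by omega] at this

lemma pd_shift : ∀ j k : ℕ, k + 1 < 2^j → pd (2^j + k) = pd k := by
  intro j
  induction j with
  | zero => intro k hk; omega
  | succ j ih =>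
    intro k hk
    rcases Nat.even_or_odd k with ⟨t, ht⟩ | ⟨t, ht⟩
    · subst ht
      rw [show 2^(j+1) + (t+t) = 2*(2^j + t) by ring, show t + t = 2*t by ring,
        pd_even, pd_even]
    · subst ht
      have h2 : t + 1 < 2^j := by
        have : 2^(j+1) = 2 * 2^j := by ring
        omega
      have e1 := pd_odd (2^j + t)
      have e2 := pd_odd t
      rw [ih t h2] at e1
      rw [show 2^(j+1) + (2*t+1) = 2*(2^j + t)+1 by ring]
      omega

lemma lp_pow (i : ℕ) : IsLocalPeriodAt pd i (2^(i+1)) := by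
  have hii : i < 2^(i+1) := by
    calc i < 2^i := Nat.lt_two_pow_self
      _ < 2^(i+1) := by have := Nat.pow_lt_pow_succ (by norm_num : 1 < 2) (n := i); omega
  refine ⟨Nat.one_le_two_pow, Or.inr ⟨hii, ?_⟩⟩
  intro k hk
  exact (pd_shift _ _ (by omega)).symm

lemma perFn_mem (i : ℕ) : IsLocalPeriodAt pd i (perFn pd i) :=
  Nat.sInf_mem (⟨2^(i+1), lp_pow i⟩ : Set.Nonempty {n | IsLocalPeriodAt pd i n})

lemma perFn_min {i n : ℕ} (h : IsLocalPeriodAt pd i n) : perFn pd i ≤ n :=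
  Nat.sInf_le h

lemma perFn_eq_of {j t : ℕ} (hmem : IsLocalPeriodAt pd j t)
    (hmin : ∀ n < t, ¬ IsLocalPeriodAt pd j n) : perFn pd j = t := by
  have h1 : perFn pd j ≤ t := Nat.sInf_le hmem
  by_contra h
  exact hmin _ (lt_of_le_of_ne h1 h) (perFn_mem j)

lemma lp_one {j : ℕ} (hj : 1 ≤ j) : IsLocalPeriodAt pd j 1 ↔ pd j = pd (j-1) := by
  unfold IsLocalPeriodAt
  constructor
  · rintro ⟨-, ⟨-, h⟩ | ⟨h, -⟩⟩
    · simpa using h 0 (by omega)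
    · omega
  · intro h
    exact ⟨le_refl 1, Or.inl ⟨hj, by intro k hk; interval_cases k; simpa using h⟩⟩

lemma pd_no_consec {r : ℕ} (h1 : pd r = 1) (h2 : pd (r+1) = 1) : False := by
  rcases Nat.mod_two_eq_zero_or_one r with h | h
  · rw [pd_even' h] at h1; omega
  · rw [pd_even' (m := r+1) (by omega)] at h2; omega

/-- Even local periods at position `2i+b` halve. -/
lemma lp_double {i n b : ℕ} (hb : b ≤ 1) :
    IsLocalPeriodAt pd (2*i+b) (2*n) ↔ IsLocalPeriodAt pd i n := by
  unfold IsLocalPeriodAt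
  constructor
  · rintro ⟨h1, ⟨h2, h3⟩ | ⟨h2, h3⟩⟩
    · refine ⟨by omega, Or.inl ⟨by omega, ?_⟩⟩
      intro k hk
      have hni : n ≤ i := by omega
      have := h3 (2*k + (1-b)) (by omega)
      rw [show 2*i+b+(2*k+(1-b)) = 2*(i+k)+1 by omega,
          show 2*i+b-2*n+(2*k+(1-b)) = 2*(i-n+k)+1 by omega] at this
      have e1 := pd_odd (i+k)
      have e2 := pd_odd (i-n+k)
      have := pd_le_one (i+k); have := pd_le_one (i-n+k)
      omega
    · refine ⟨by omega, Or.inr ⟨by omega, ?_⟩⟩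
      intro k hk
      have := h3 (2*k+1) (by omega)
      rw [show 2*n+(2*k+1) = 2*(n+k)+1 by omega] at this
      have e1 := pd_odd k
      have e2 := pd_odd (n+k)
      have := pd_le_one k; have := pd_le_one (n+k)
      omega
  · rintro ⟨h1, ⟨h2, h3⟩ | ⟨h2, h3⟩⟩
    · refine ⟨by omega, Or.inl ⟨by omega, ?_⟩⟩
      intro k hk
      rcases Nat.mod_two_eq_zero_or_one (k+b) with he | he
      · rw [pd_even' (m := 2*i+b+k) (by omega), pd_even' (m := 2*i+b-2*n+k) (by omega)]
      · set t := (k-(1-b))/2 with ht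
        have htk : k = 2*t + (1-b) := by omega
        have := h3 t (by omega)
        have e1 := pd_odd (i+t)
        have e2 := pd_odd (i-n+t)
        rw [show 2*i+b+k = 2*(i+t)+1 by omega,
            show 2*i+b-2*n+k = 2*(i-n+t)+1 by omega]
        have := pd_le_one (i+t); have := pd_le_one (i-n+t)
        omega
    · refine ⟨by omega, Or.inr ⟨by omega, ?_⟩⟩
      intro k hk
      rcases Nat.mod_two_eq_zero_or_one k with he | he
      · rw [pd_even' (m := k) (by omega), pd_even' (m := 2*n+k) (by omega)]
      · set t := k/2 with ht
        have htk : k = 2*t+1 := by omega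
        have := h3 t (by omega)
        have e1 := pd_odd t
        have e2 := pd_odd (n+t)
        rw [show k = 2*t+1 by omega, show 2*n+(2*t+1) = 2*(n+t)+1 by omega]
        have := pd_le_one t; have := pd_le_one (n+t)
        omega

/-- No odd local period `n ≥ 3` at positions `j ≥ 2`. -/
lemma lp_no_odd {j n : ℕ} (hj : 2 ≤ j) (hn : 3 ≤ n) (hodd : n % 2 = 1) :
    ¬ IsLocalPeriodAt pd j n := by
  rintro ⟨-, ⟨h2, h3⟩ | ⟨h2, h3⟩⟩
  · set m := j - n with hm
    have e1 := h3 0 (by omega)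
    have e2 := h3 2 (by omega)
    rw [show j + 0 = m + n by omega, show j - n + 0 = m by omega] at e1
    rw [show j + 2 = m + 2 + n by omega, show j - n + 2 = m + 2 by omega] at e2
    rcases Nat.mod_two_eq_zero_or_one m with he | he
    · have q1 := pd_even' (m := m) he
      have q2 := pd_even' (m := m+2) (by omega)
      have q3 := pd_odd' (m := m+n) (by omega)
      have q4 := pd_odd' (m := m+2+n) (by omega)
      rw [show (m+2+n)/2 = (m+n)/2 + 1 by omega] at q4
      exact pd_no_consec (r := (m+n)/2) (by omega) (by omega)
    · have q1 := pd_even' (m := m+n) (by omega)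
      have q2 := pd_even' (m := m+2+n) (by omega)
      have q3 := pd_odd' (m := m) he
      have q4 := pd_odd' (m := m+2) (by omega)
      rw [show (m+2)/2 = m/2 + 1 by omega] at q4
      exact pd_no_consec (r := m/2) (by omega) (by omega)
  · have := h3 1 (by omega)
    rw [pd_one, pd_even' (m := n+1) (by omega)] at this
    omega

lemma perFn_double {m b : ℕ} (hm : 1 ≤ m) (hb : b ≤ 1)
    (h1 : pd (2*m+b) ≠ pd (2*m+b-1)) :
    perFn pd (2*m+b) = 2 * perFn pd m := by
  apply perFn_eq_of
  · exact (lp_double hb).mpr (perFn_mem m)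
  · intro n hn hLP
    have hn1 : 1 ≤ n := hLP.1
    rcases Nat.mod_two_eq_zero_or_one n with he | ho
    · have h2 : IsLocalPeriodAt pd m (n/2) := by
        refine (lp_double (i:=m) (n:=n/2) hb).mp ?_
        rw [show 2*(n/2) = n by omega]; exact hLP
      have := perFn_min h2
      omega
    · rcases Nat.lt_or_ge n 3 with h3 | h3
      · have hn1' : n = 1 := by omega
        subst hn1'
        exact h1 ((lp_one (by omega)).mp hLP)
      · exact lp_no_odd (by omega) h3 ho hLP

lemma perFn_one_of {j : ℕ} (hj : 1 ≤ j) (h : pd j = pd (j-1)) : perFn pd j = 1 :=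
  perFn_eq_of ((lp_one hj).mpr h) (fun n hn hLP => by have := hLP.1; omega)

end Aux

/- ========================= Matrix side ========================= -/

section Mats

local notation "Mat0" => (!![1, 0, 0, 0, 0, 0;
                 0, 0, 0, 1, 0, 1;
                 0, 0, 0, 0, 0, 2;
                 0, 0, 0, 0, 1, 0;
                 0, 0, 0, 1, 0, 1;
                 0, 0, 0, 0, 0, 0] : Matrix (Fin 6) (Fin 6) ℤ)
local notation "Mat1" => (!![0, 1, 1, 0, 0, 0;
                 0, 0, 0, 0, 1, 0;
                 0, 0, 0, 0, 0, 0;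
                 0, 1, 1, 0, 0, 0;
                 0, 1, 1, 0, 0, 0;
                 0, 0, 2, 0, 0, 0] : Matrix (Fin 6) (Fin 6) ℤ)
local notation "Wcol" => (!![1; 1; 1; 1; 1; 1] : Matrix (Fin 6) (Fin 1) ℤ)
local notation "Vrow" => (!![1, 0, 0, 0, 0, 0] : Matrix (Fin 1) (Fin 6) ℤ)

lemma cons_val_five' {α : Type*} (a b c d e f : α) : ![a,b,c,d,e,f] 5 = f := rfl

def rowA (t : ℤ) : Matrix (Fin 1) (Fin 6) ℤ := !![0, 1, t, 0, 0, 0]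
def rowB (t : ℤ) : Matrix (Fin 1) (Fin 6) ℤ := !![0, 0, 0, 1, 0, t]
def rowC : Matrix (Fin 1) (Fin 6) ℤ := !![0, 0, 0, 0, 1, 0]

lemma digitMatProd_step (M0 M1 : Matrix (Fin 6) (Fin 6) ℤ) {i b : ℕ} (hi : 1 ≤ i) (hb : b ≤ 1) :
    digitMatProd M0 M1 (2*i+b) = digitMatProd M0 M1 i * (if b = 1 then M1 else M0) := by
  unfold digitMatProd
  rw [Nat.digits_def' (by norm_num : 1 < 2) (by omega : 0 < 2*i+b)]
  rw [show (2*i+b) % 2 = b by omega, show (2*i+b) / 2 = i by omega]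
  rw [List.reverse_cons, List.map_append, List.prod_append]
  simp

lemma digitMatProd_one (M0 M1 : Matrix (Fin 6) (Fin 6) ℤ) :
    digitMatProd M0 M1 1 = M1 := by
  unfold digitMatProd
  simp [Nat.digits_def' (by norm_num : (1:ℕ) < 2) (by norm_num : (0:ℕ) < 1)]

lemma rowA_M0 (t : ℤ) : rowA t * Mat0 = rowB (2*t+1) := by
  ext i j
  fin_cases i <;> fin_cases j <;>
    simp [rowA, rowB, Matrix.mul_apply, Fin.sum_univ_succ, Matrix.cons_val_zero,
      Matrix.cons_val_succ, cons_val_five'] <;> ring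

lemma rowA_M1 (t : ℤ) : rowA t * Mat1 = rowC := by
  ext i j
  fin_cases i <;> fin_cases j <;>
    simp [rowA, rowC, Matrix.mul_apply, Fin.sum_univ_succ, Matrix.cons_val_zero,
      Matrix.cons_val_succ, cons_val_five']

lemma rowB_M0 (t : ℤ) : rowB t * Mat0 = rowC := by
  ext i j
  fin_cases i <;> fin_cases j <;>
    simp [rowB, rowC, Matrix.mul_apply, Fin.sum_univ_succ, Matrix.cons_val_zero,
      Matrix.cons_val_succ, cons_val_five']

lemma rowB_M1 (t : ℤ) : rowB t * Mat1 = rowA (2*t+1) := by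
  ext i j
  fin_cases i <;> fin_cases j <;>
    simp [rowA, rowB, Matrix.mul_apply, Fin.sum_univ_succ, Matrix.cons_val_zero,
      Matrix.cons_val_succ, cons_val_five'] <;> ring

lemma rowC_M0 : rowC * Mat0 = rowB 1 := by
  ext i j
  fin_cases i <;> fin_cases j <;>
    simp [rowB, rowC, Matrix.mul_apply, Fin.sum_univ_succ, Matrix.cons_val_zero,
      Matrix.cons_val_succ, cons_val_five']

lemma rowC_M1 : rowC * Mat1 = rowA 1 := by
  ext i j
  fin_cases i <;> fin_cases j <;>
    simp [rowA, rowC, Matrix.mul_apply, Fin.sum_univ_succ, Matrix.cons_val_zero,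
      Matrix.cons_val_succ, cons_val_five']

lemma v_M1 : Vrow * Mat1 = rowA 1 := by
  ext i j
  fin_cases i <;> fin_cases j <;>
    simp [rowA, Matrix.mul_apply, Fin.sum_univ_succ, Matrix.cons_val_zero,
      Matrix.cons_val_succ, cons_val_five']

lemma rowA_w (t : ℤ) : (rowA t * Wcol) 0 0 = 1 + t := by
  simp [rowA, Matrix.mul_apply, Fin.sum_univ_succ, Matrix.cons_val_zero,
      Matrix.cons_val_succ, cons_val_five']

lemma rowB_w (t : ℤ) : (rowB t * Wcol) 0 0 = 1 + t := by
  simp [rowB, Matrix.mul_apply, Fin.sum_univ_succ, Matrix.cons_val_zero,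
      Matrix.cons_val_succ, cons_val_five']

lemma rowC_w : (rowC * Wcol) 0 0 = 1 := by
  simp [rowC, Matrix.mul_apply, Fin.sum_univ_succ, Matrix.cons_val_zero,
      Matrix.cons_val_succ, cons_val_five']

/- ========================= Main induction ========================= -/

lemma main_inv : ∀ i : ℕ, 1 ≤ i →
    (perFn pd i = 1 ∧ Vrow * digitMatProd Mat0 Mat1 i = rowC ∧
      ((i % 2 = 1 ∧ pd i = 0) ∨ (i % 2 = 0 ∧ pd (i-1) = 0))) ∨
    (1 < perFn pd i ∧ i % 2 = 1 ∧
      Vrow * digitMatProd Mat0 Mat1 i = rowA ((perFn pd i : ℤ) - 1) ∧ pd i = 1) ∨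
    (1 < perFn pd i ∧ i % 2 = 0 ∧
      Vrow * digitMatProd Mat0 Mat1 i = rowB ((perFn pd i : ℤ) - 1) ∧ pd (i-1) = 1) := by
  intro i
  induction i using Nat.strong_induction_on with
  | _ i IH =>
  intro hi
  rcases eq_or_lt_of_le hi with h1 | h2
  · -- base case i = 1
    subst h1
    have hP : perFn pd 1 = 2 := by
      apply perFn_eq_of
      · refine ⟨by omega, Or.inr ⟨by omega, ?_⟩⟩
        intro k hk; interval_cases k
        rw [pd_zero, show (2:ℕ)+0 = 2*1 by norm_num, pd_even]
      · intro n hn hLP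
        have := hLP.1
        have hn1 : n = 1 := by omega
        subst hn1
        have := (lp_one (by omega)).mp hLP
        rw [pd_one, show (1:ℕ)-1 = 0 by norm_num, pd_zero] at this
        omega
    refine Or.inr (Or.inl ⟨by omega, by omega, ?_, pd_one⟩)
    rw [digitMatProd_one, v_M1, hP]
    norm_num
  · -- inductive step : i = 2*m + b with m ≥ 1
    obtain ⟨b, m, hb, rfl⟩ : ∃ b m, b ≤ 1 ∧ i = 2*m+b :=
      ⟨i % 2, i / 2, by omega, by omega⟩
    have hm : 1 ≤ m := by omega
    have hR : Vrow * digitMatProd Mat0 Mat1 (2*m+b) =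
        (Vrow * digitMatProd Mat0 Mat1 m) * (if b = 1 then Mat1 else Mat0) := by
      rw [digitMatProd_step _ _ hm hb, Matrix.mul_assoc]
    have hPm1 : 1 ≤ perFn pd m := (perFn_mem m).1
    rcases IH m (by omega) hm with ⟨hP, hRm, hJ⟩ | ⟨hP, hodd, hRm, hpd⟩ | ⟨hP, heven, hRm, hpd⟩
    · -- case C at m
      have hpdm : pd m = 0 := by
        rcases hJ with ⟨h, h'⟩ | ⟨h, h'⟩
        · exact h'
        · exact pd_even' h
      have hpdm1 : pd (m-1) = 0 := by
        rcases hJ with ⟨h, h'⟩ | ⟨h, h'⟩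
        · exact pd_even' (by omega)
        · exact h'
      have hpd2m1 : pd (2*m-1) = 1 := by
        have := pd_odd (m-1)
        rw [show 2*(m-1)+1 = 2*m-1 by omega] at this
        omega
      interval_cases b
      · -- i = 2m
        have hd : perFn pd (2*m+0) = 2 * perFn pd m := by
          apply perFn_double hm (by omega)
          rw [show 2*m+0-1 = 2*m-1 by omega, show 2*m+0 = 2*m by omega, pd_even, hpd2m1]
          omega
        have hP2 : perFn pd (2*m+0) = 2 := by rw [hd, hP]
        refine Or.inr (Or.inr ⟨by omega, by omega, ?_, ?_⟩)
        · rw [hR, hRm, show (if (0:ℕ) = 1 then Mat1 else Mat0) = Mat0 from rfl,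
            rowC_M0, hP2]
          norm_num
        · rw [show 2*m+0-1 = 2*m-1 by omega, hpd2m1]
      · -- i = 2m+1
        have hd : perFn pd (2*m+1) = 2 * perFn pd m := by
          apply perFn_double hm (by omega)
          have e := pd_odd m
          rw [show 2*m+1-1 = 2*m by omega, pd_even]
          omega
        have hP2 : perFn pd (2*m+1) = 2 := by rw [hd, hP]
        refine Or.inr (Or.inl ⟨by omega, by omega, ?_, ?_⟩)
        · rw [hR, hRm, show (if (1:ℕ) = 1 then Mat1 else Mat0) = Mat1 from rfl,
            rowC_M1, hP2]
          norm_num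
        · have e := pd_odd m
          omega
    · -- case A at m : m odd, pd m = 1, 1 < Pm
      have hpdm1 : pd (m-1) = 0 := pd_even' (by omega)
      have hpd2m1 : pd (2*m-1) = 1 := by
        have := pd_odd (m-1)
        rw [show 2*(m-1)+1 = 2*m-1 by omega] at this
        omega
      interval_cases b
      · -- i = 2m : doubling, B state
        have hP2 : perFn pd (2*m+0) = 2 * perFn pd m := by
          apply perFn_double hm (by omega)
          rw [show 2*m+0-1 = 2*m-1 by omega, show 2*m+0 = 2*m by omega, pd_even, hpd2m1]
          omega
        refine Or.inr (Or.inr ⟨by omega, by omega, ?_, ?_⟩)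
        · rw [hR, hRm, show (if (0:ℕ) = 1 then Mat1 else Mat0) = Mat0 from rfl,
            rowA_M0, hP2]
          congr 1
          push_cast
          ring
        · rw [show 2*m+0-1 = 2*m-1 by omega, hpd2m1]
      · -- i = 2m+1 : collapse to C
        have hpd2m1' : pd (2*m+1) = 0 := by
          have := pd_odd m
          omega
        have hP2 : perFn pd (2*m+1) = 1 := by
          apply perFn_one_of (by omega)
          rw [show 2*m+1-1 = 2*m by omega, pd_even, hpd2m1']
        refine Or.inl ⟨hP2, ?_, Or.inl ⟨by omega, hpd2m1'⟩⟩
        rw [hR, hRm, show (if (1:ℕ) = 1 then Mat1 else Mat0) = Mat1 from rfl, rowA_M1]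
    · -- case B at m : m even, pd (m-1) = 1, 1 < Pm
      have hpdm : pd m = 0 := pd_even' heven
      have hpd2m1 : pd (2*m-1) = 0 := by
        have := pd_odd (m-1)
        rw [show 2*(m-1)+1 = 2*m-1 by omega] at this
        omega
      interval_cases b
      · -- i = 2m : collapse to C
        have hP2 : perFn pd (2*m+0) = 1 := by
          apply perFn_one_of (by omega)
          rw [show 2*m+0-1 = 2*m-1 by omega, show 2*m+0 = 2*m by omega, pd_even, hpd2m1]
        refine Or.inl ⟨hP2, ?_, Or.inr ⟨by omega, by rw [show 2*m+0-1 = 2*m-1 by omega, hpd2m1]⟩⟩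
        rw [hR, hRm, show (if (0:ℕ) = 1 then Mat1 else Mat0) = Mat0 from rfl, rowB_M0]
      · -- i = 2m+1 : doubling, A state
        have hpd2m1' : pd (2*m+1) = 1 := by
          have := pd_odd m
          omega
        have hP2 : perFn pd (2*m+1) = 2 * perFn pd m := by
          apply perFn_double hm (by omega)
          rw [show 2*m+1-1 = 2*m by omega, pd_even, hpd2m1']
          omega
        refine Or.inr (Or.inl ⟨by omega, by omega, ?_, hpd2m1'⟩)
        rw [hR, hRm, show (if (1:ℕ) = 1 then Mat1 else Mat0) = Mat1 from rfl,
          rowB_M1, hP2]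
        congr 1
        push_cast
        ring

end Mats

theorem pd_perFn_linear_representation :
    ∀ i : ℕ, 1 ≤ i →
      (perFn pd i : ℤ) =
        ((!![1, 0, 0, 0, 0, 0] : Matrix (Fin 1) (Fin 6) ℤ) *
            digitMatProd
              !![1, 0, 0, 0, 0, 0;
                 0, 0, 0, 1, 0, 1;
                 0, 0, 0, 0, 0, 2;
                 0, 0, 0, 0, 1, 0;
                 0, 0, 0, 1, 0, 1;
                 0, 0, 0, 0, 0, 0]
              !![0, 1, 1, 0, 0, 0;
                 0, 0, 0, 0, 1, 0;
                 0, 0, 0, 0, 0, 0;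
                 0, 1, 1, 0, 0, 0;
                 0, 1, 1, 0, 0, 0;
                 0, 0, 2, 0, 0, 0] i *
            (!![1; 1; 1; 1; 1; 1] : Matrix (Fin 6) (Fin 1) ℤ)) 0 0 := by
  intro i hi
  rcases main_inv i hi with ⟨hP, hR, -⟩ | ⟨-, -, hR, -⟩ | ⟨-, -, hR, -⟩
  · rw [hR, rowC_w, hP]
    norm_num
  · rw [hR, rowA_w]
    ring
  · rw [hR, rowB_w]
    ring
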